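/- arXiv:1004.5235 — 2 statements merged into one kernel-verified Lean document; each statement's English description precedes it below -/
import Mathlib

section
/- Let k be a commutative ring, H a Hopf algebra over k with bijective antipode S (with inverse S̄), and A a right H-comodule algebra with coaction ρ(a)=a_[0]⊗a_[1]. Then there is an isomorphism of k-linear categories γ: C'_A → C_A which is the identity on the two objects 1, 2 and sends a morphism f' to f'∘S; its inverse functor sends f to f∘S̄. In particular γ maps each hom-module C'_A(i,j) bijectively onto C_A(i,j) and satisfies γ(f'⋆g') = γ(f')*γ(g'). -/
open TensorProduct Coalgebra HopfAlgebra LinearMap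

noncomputable section

universe u

variable {k : Type u} [CommRing k]
variable {H : Type u} [Ring H] [HopfAlgebra k H]
variable {A : Type u} [Ring A] [Algebra k A]

/-- The coaction `ρ` is coassociative and counital. -/
def IsCoaction (ρ : A →ₗ[k] A ⊗[k] H) : Prop :=
  (∀ a, ρ.rTensor H (ρ a) =
      (TensorProduct.assoc k A H H).symm ((Coalgebra.comul (R := k) (A := H)).lTensor A (ρ a))) ∧
  (∀ a, (TensorProduct.rid k A) ((Coalgebra.counit (R := k) (A := H)).lTensor A (ρ a)) = a)

/-- The coinvariant subalgebra `B = A^{co H}` of a comodule algebra. -/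
def coinv (ρ : A →ₐ[k] A ⊗[k] H) : Subalgebra k A where
  carrier := {a | ρ a = a ⊗ₜ[k] (1 : H)}
  one_mem' := by
    show ρ 1 = (1 : A) ⊗ₜ[k] (1 : H)
    rw [map_one, Algebra.TensorProduct.one_def]
  mul_mem' := by
    intro a b ha hb
    show ρ (a * b) = (a * b) ⊗ₜ[k] (1 : H)
    rw [map_mul, ha, hb, Algebra.TensorProduct.tmul_mul_tmul, one_mul]
  add_mem' := by
    intro a b ha hb
    show ρ (a + b) = (a + b) ⊗ₜ[k] (1 : H)
    rw [map_add, ha, hb, TensorProduct.add_tmul]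
  zero_mem' := by
    show ρ 0 = (0 : A) ⊗ₜ[k] (1 : H)
    rw [map_zero, TensorProduct.zero_tmul]
  algebraMap_mem' := by
    intro r
    show ρ (algebraMap k A r) = (algebraMap k A r) ⊗ₜ[k] (1 : H)
    rw [AlgHom.commutes, Algebra.TensorProduct.algebraMap_apply]

/-- Convolution product on `Hom(H, A)`. -/
def conv (f g : H →ₗ[k] A) : H →ₗ[k] A :=
  (LinearMap.mul' k A) ∘ₗ (TensorProduct.map f g) ∘ₗ Coalgebra.comul

/-- Opposite convolution product `(f ⋆ g)(h) = f(h₍₂₎) g(h₍₁₎)`. -/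
def convOp (f g : H →ₗ[k] A) : H →ₗ[k] A :=
  (LinearMap.mul' k A) ∘ₗ (TensorProduct.map f g) ∘ₗ
    (TensorProduct.comm k H H).toLinearMap ∘ₗ Coalgebra.comul

/-- The rearranged iterated comultiplication `h ↦ h₍₂₎ ⊗ (h₍₁₎ ⊗ h₍₃₎)`. -/
def sweedler213 : H →ₗ[k] H ⊗[k] (H ⊗[k] H) :=
  (TensorProduct.assoc k H H H).toLinearMap
    ∘ₗ (((TensorProduct.comm k H H).toLinearMap).rTensor H)
    ∘ₗ (TensorProduct.assoc k H H H).symm.toLinearMap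
    ∘ₗ ((Coalgebra.comul (R := k) (A := H)).lTensor H) ∘ₗ Coalgebra.comul

/-- `v ∈ C_A(1,1) = Hom(H, B)`, i.e. `ρ(v(h)) = v(h) ⊗ 1`. -/
def memC11 (ρ : A →ₗ[k] A ⊗[k] H) (v : H →ₗ[k] A) : Prop :=
  ∀ h, ρ (v h) = v h ⊗ₜ[k] (1 : H)

/-- `t ∈ C_A(2,1) = Hom^H(H, A)`, i.e. `ρ(t(h)) = t(h₍₁₎) ⊗ h₍₂₎`. -/
def memC21 (ρ : A →ₗ[k] A ⊗[k] H) (t : H →ₗ[k] A) : Prop :=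
  ∀ h, ρ (t h) = TensorProduct.map t LinearMap.id (Coalgebra.comul h)

/-- `u ∈ C_A(1,2)`, i.e. `ρ(u(h)) = u(h₍₂₎) ⊗ S(h₍₁₎)`. -/
def memC12 (ρ : A →ₗ[k] A ⊗[k] H) (u : H →ₗ[k] A) : Prop :=
  ∀ h, ρ (u h) =
    TensorProduct.map u (HopfAlgebra.antipode (R := k))
      ((TensorProduct.comm k H H) (Coalgebra.comul h))

/-- `w ∈ C_A(2,2)`, i.e. `ρ(w(h)) = w(h₍₂₎) ⊗ S(h₍₁₎) h₍₃₎`. -/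
def memC22 (ρ : A →ₗ[k] A ⊗[k] H) (w : H →ₗ[k] A) : Prop :=
  ∀ h, ρ (w h) =
    TensorProduct.map w
      ((LinearMap.mul' k H) ∘ₗ TensorProduct.map (HopfAlgebra.antipode (R := k)) LinearMap.id)
      (sweedler213 h)

/-- `u' ∈ C'_A(2,1)`, i.e. `ρ(u'(h)) = u'(h₍₂₎) ⊗ S̄(h₍₁₎)`. -/
def memC'21 (ρ : A →ₗ[k] A ⊗[k] H) (Sbar : H →ₗ[k] H) (u' : H →ₗ[k] A) : Prop :=
  ∀ h, ρ (u' h) =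
    TensorProduct.map u' Sbar ((TensorProduct.comm k H H) (Coalgebra.comul h))

/-- `w' ∈ C'_A(2,2)`, i.e. `ρ(w'(h)) = w'(h₍₂₎) ⊗ h₍₃₎ S̄(h₍₁₎)`. -/
def memC'22 (ρ : A →ₗ[k] A ⊗[k] H) (Sbar : H →ₗ[k] H) (w' : H →ₗ[k] A) : Prop :=
  ∀ h, ρ (w' h) =
    TensorProduct.map w'
      ((LinearMap.mul' k H) ∘ₗ (TensorProduct.map LinearMap.id Sbar) ∘ₗ
        (TensorProduct.comm k H H).toLinearMap)
      (sweedler213 h)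

end

noncomputable section
 
variable {k : Type u} [CommRing k]
variable {H : Type u} [Ring H] [HopfAlgebra k H]
variable {L : Type u} [Ring L] [Algebra k L]

namespace Aux

/-- convolution with target algebra `L` -/
def cv (f g : H →ₗ[k] L) : H →ₗ[k] L :=
  (LinearMap.mul' k L) ∘ₗ (TensorProduct.map f g) ∘ₗ Coalgebra.comul

def cu : H →ₗ[k] L := Algebra.linearMap k L ∘ₗ Coalgebra.counit

lemma cv_repr (f g : H →ₗ[k] L) (h : H) (r : Coalgebra.Repr k h (H × H)) :
    cv f g h = ∑ i ∈ r.index, f (r.left i) * g (r.right i) := by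
  simp only [cv, comp_apply, ← r.eq, map_sum, TensorProduct.map_tmul, mul'_apply]

lemma cu_apply (h : H) : (cu (k := k) (H := H) (L := L)) h = algebraMap k L (Coalgebra.counit h) := rfl

lemma sum_counit_smul_right {M : Type u} [AddCommMonoid M] [Module k M]
    (f : H →ₗ[k] M) (h : H) (r : Coalgebra.Repr k h (H × H)) :
    ∑ i ∈ r.index, Coalgebra.counit (R := k) (r.right i) • f (r.left i) = f h := by
  have key := congrArg (TensorProduct.rid k M)
    (sum_map_tmul_counit_eq (R := k) (f := f) (a := h) (repr := r))
  simp only [map_sum, TensorProduct.rid_tmul, one_smul] at key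
  exact key

lemma sum_counit_smul_left {M : Type u} [AddCommMonoid M] [Module k M]
    (f : H →ₗ[k] M) (h : H) (r : Coalgebra.Repr k h (H × H)) :
    ∑ i ∈ r.index, Coalgebra.counit (R := k) (r.left i) • f (r.right i) = f h := by
  have key := congrArg (TensorProduct.lid k M)
    (sum_counit_tmul_map_eq (R := k) (f := f) (a := h) (repr := r))
  simp only [map_sum, TensorProduct.lid_tmul, one_smul] at key
  exact key

lemma cv_cu_right (f : H →ₗ[k] L) : cv f cu = f := by
  apply LinearMap.ext; intro h
  rw [cv_repr f cu h (ℛ k h)]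
  have step : ∀ i ∈ (ℛ k h).index,
      f ((ℛ k h).left i) * cu (k := k) ((ℛ k h).right i) =
        Coalgebra.counit (R := k) ((ℛ k h).right i) • f ((ℛ k h).left i) := by
    intro i _
    rw [cu_apply, ← Algebra.commutes (R := k), ← Algebra.smul_def]
  rw [Finset.sum_congr rfl step]
  exact sum_counit_smul_right f h (ℛ k h)

lemma cv_cu_left (f : H →ₗ[k] L) : cv cu f = f := by
  apply LinearMap.ext; intro h
  rw [cv_repr cu f h (ℛ k h)]
  have step : ∀ i ∈ (ℛ k h).index,
      cu (k := k) ((ℛ k h).left i) * f ((ℛ k h).right i) =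
        Coalgebra.counit (R := k) ((ℛ k h).left i) • f ((ℛ k h).right i) := by
    intro i _
    rw [cu_apply, ← Algebra.smul_def (R := k)]
  rw [Finset.sum_congr rfl step]
  exact sum_counit_smul_left f h (ℛ k h)

lemma cv_assoc (f g e : H →ₗ[k] L) : cv (cv f g) e = cv f (cv g e) := by
  apply LinearMap.ext; intro h
  set r := ℛ k h
  set a₁ : (i : r.ι) → Coalgebra.Repr k (r.left i) (H × H) := fun i => ℛ k (r.left i) with ha₁
  set a₂ : (i : r.ι) → Coalgebra.Repr k (r.right i) (H × H) := fun i => ℛ k (r.right i) with ha₂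
  have key := congrArg (LinearMap.mul' k L ∘ₗ LinearMap.lTensor L (LinearMap.mul' k L))
    (sum_map_tmul_tmul_eq (R := k) (f := f) (g := g) (h := e) (a := h)
      (repr := r) (a₁ := a₁) (a₂ := a₂))
  simp only [map_sum, comp_apply, lTensor_tmul, mul'_apply] at key
  rw [cv_repr (cv f g) e h r, cv_repr f (cv g e) h r]
  calc ∑ i ∈ r.index, cv f g (r.left i) * e (r.right i)
      = ∑ i ∈ r.index, ∑ j ∈ (a₁ i).index,
          f ((a₁ i).left j) * (g ((a₁ i).right j) * e (r.right i)) := by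
        refine Finset.sum_congr rfl fun i _ => ?_
        rw [cv_repr f g (r.left i) (a₁ i), Finset.sum_mul]
        exact Finset.sum_congr rfl fun j _ => mul_assoc _ _ _
    _ = ∑ i ∈ r.index, ∑ j ∈ (a₂ i).index,
          f (r.left i) * (g ((a₂ i).left j) * e ((a₂ i).right j)) := key.symm
    _ = ∑ i ∈ r.index, f (r.left i) * cv g e (r.right i) := by
        refine Finset.sum_congr rfl fun i _ => ?_
        rw [cv_repr g e (r.right i) (a₂ i), Finset.mul_sum]


section Antipode
variable (k H)

/-- `F = Δ ∘ S` -/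
def Fm : H →ₗ[k] H ⊗[k] H := Coalgebra.comul ∘ₗ HopfAlgebra.antipode (R := k)

/-- `G = (S ⊗ S) ∘ τ ∘ Δ` -/
def Gm : H →ₗ[k] H ⊗[k] H :=
  TensorProduct.map (HopfAlgebra.antipode (R := k)) (HopfAlgebra.antipode (R := k)) ∘ₗ
    (TensorProduct.comm k H H).toLinearMap ∘ₗ Coalgebra.comul

end Antipode

lemma cv_F_D : cv (Fm k H) (Coalgebra.comul (R := k) (A := H)) = cu := by
  apply LinearMap.ext; intro h
  set r := ℛ k h
  rw [cv_repr _ _ h r]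
  have step : ∀ i ∈ r.index,
      Fm k H (r.left i) * Coalgebra.comul (r.right i) =
        Coalgebra.comul (R := k) (HopfAlgebra.antipode (R := k) (r.left i) * r.right i) := by
    intro i _
    rw [Bialgebra.comul_mul]; rfl
  rw [Finset.sum_congr rfl step, ← map_sum, sum_antipode_mul_eq_algebraMap_counit r,
    Bialgebra.comul_algebraMap]
  rfl

lemma cv_D_G : cv (Coalgebra.comul (R := k) (A := H)) (Gm k H) = cu := by
  apply LinearMap.ext; intro h
  set S := HopfAlgebra.antipode (R := k) (A := H) with hS
  set r := ℛ k h
  set a₁ : (i : r.ι) → Coalgebra.Repr k (r.left i) (H × H) := fun i => ℛ k (r.left i) with ha₁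
  set a₂ : (i : r.ι) → Coalgebra.Repr k (r.right i) (H × H) := fun i => ℛ k (r.right i) with ha₂
  set b : (i : r.ι) → (j : (a₁ i).ι) → Coalgebra.Repr k ((a₁ i).left j) (H × H) :=
    fun i j => ℛ k ((a₁ i).left j) with hb
  set c : (i : r.ι) → (j : (a₁ i).ι) → Coalgebra.Repr k ((a₁ i).right j) (H × H) :=
    fun i j => ℛ k ((a₁ i).right j) with hc
  -- Step A : expand the convolution
  have stepA : cv (Coalgebra.comul (R := k) (A := H)) (Gm k H) h =
      ∑ i ∈ r.index, ∑ m ∈ (a₂ i).index,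
        Coalgebra.comul (R := k) (r.left i) *
          (S ((a₂ i).right m) ⊗ₜ[k] S ((a₂ i).left m)) := by
    rw [cv_repr _ _ h r]
    refine Finset.sum_congr rfl fun i _ => ?_
    have : Gm k H (r.right i) = ∑ m ∈ (a₂ i).index,
        S ((a₂ i).right m) ⊗ₜ[k] S ((a₂ i).left m) := by
      simp only [Gm, comp_apply, LinearEquiv.coe_coe, ← (a₂ i).eq, map_sum,
        TensorProduct.comm_tmul, TensorProduct.map_tmul, hS]
    rw [this, Finset.mul_sum]
  -- Step B : use coassociativity
  have keyB := congrArg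
    (LinearMap.mul' k (H ⊗[k] H) ∘ₗ TensorProduct.map (Coalgebra.comul (R := k))
      (TensorProduct.map S S ∘ₗ (TensorProduct.comm k H H).toLinearMap))
    (sum_tmul_tmul_eq r a₁ a₂)
  simp only [map_sum, comp_apply, TensorProduct.map_tmul, LinearEquiv.coe_coe,
    TensorProduct.comm_tmul, mul'_apply] at keyB
  rw [stepA, ← keyB]
  -- Step C : collapse the inner sums
  have stepC : ∀ i ∈ r.index,
      ∑ j ∈ (a₁ i).index,
        Coalgebra.comul (R := k) ((a₁ i).left j) * (S (r.right i) ⊗ₜ[k] S ((a₁ i).right j)) =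
      (r.left i * S (r.right i)) ⊗ₜ[k] (1 : H) := by
    intro i _
    have keyC := congrArg
      (TensorProduct.map (LinearMap.id (R := k) (M := H))
        (LinearMap.mul' k H ∘ₗ TensorProduct.map LinearMap.id S))
      (sum_tmul_tmul_eq (a₁ i) (b i) (c i))
    simp only [map_sum, TensorProduct.map_tmul, comp_apply, id_coe, id_eq, mul'_apply] at keyC
    have inner : ∀ j ∈ (a₁ i).index,
        ∑ m ∈ (c i j).index,
          (a₁ i).left j ⊗ₜ[k] ((c i j).left m * S ((c i j).right m)) =
        Coalgebra.counit (R := k) ((a₁ i).right j) •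
          ((a₁ i).left j ⊗ₜ[k] (1 : H)) := by
      intro j _
      rw [← TensorProduct.tmul_sum, sum_mul_antipode_eq_algebraMap_counit (c i j), Algebra.algebraMap_eq_smul_one,
        TensorProduct.tmul_smul]
    rw [Finset.sum_congr rfl inner] at keyC
    have E : ∑ j ∈ (a₁ i).index, ∑ m ∈ (b i j).index,
        (b i j).left m ⊗ₜ[k] ((b i j).right m * S ((a₁ i).right j)) =
        r.left i ⊗ₜ[k] (1 : H) := by
      rw [keyC]
      exact sum_counit_smul_right ((TensorProduct.mk k H H).flip 1) (r.left i) (a₁ i)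
    calc ∑ j ∈ (a₁ i).index,
          Coalgebra.comul (R := k) ((a₁ i).left j) * (S (r.right i) ⊗ₜ[k] S ((a₁ i).right j))
        = ∑ j ∈ (a₁ i).index, ∑ m ∈ (b i j).index,
            ((b i j).left m * S (r.right i)) ⊗ₜ[k] ((b i j).right m * S ((a₁ i).right j)) := by
          refine Finset.sum_congr rfl fun j _ => ?_
          rw [← (b i j).eq, Finset.sum_mul]
          exact Finset.sum_congr rfl fun m _ => Algebra.TensorProduct.tmul_mul_tmul _ _ _ _
      _ = TensorProduct.map (LinearMap.mulRight k (S (r.right i))) LinearMap.id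
            (∑ j ∈ (a₁ i).index, ∑ m ∈ (b i j).index,
              (b i j).left m ⊗ₜ[k] ((b i j).right m * S ((a₁ i).right j))) := by
          simp only [map_sum, TensorProduct.map_tmul, mulRight_apply, id_coe, id_eq]
      _ = (r.left i * S (r.right i)) ⊗ₜ[k] (1 : H) := by
          rw [E]
          simp only [TensorProduct.map_tmul, mulRight_apply, id_coe, id_eq]
  rw [Finset.sum_congr rfl stepC, ← TensorProduct.sum_tmul, sum_mul_antipode_eq_algebraMap_counit r]
  rw [cu_apply, Algebra.TensorProduct.algebraMap_apply]

lemma comul_antipode_map :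
    Coalgebra.comul ∘ₗ HopfAlgebra.antipode (R := k) (A := H) =
      TensorProduct.map (HopfAlgebra.antipode (R := k)) (HopfAlgebra.antipode (R := k)) ∘ₗ
        (TensorProduct.comm k H H).toLinearMap ∘ₗ Coalgebra.comul := by
  show Fm k H = Gm k H
  calc Fm k H = cv (Fm k H) cu := (cv_cu_right _).symm
    _ = cv (Fm k H) (cv (Coalgebra.comul (R := k)) (Gm k H)) := by rw [cv_D_G]
    _ = cv (cv (Fm k H) (Coalgebra.comul (R := k))) (Gm k H) := (cv_assoc _ _ _).symm
    _ = cv cu (Gm k H) := by rw [cv_F_D]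
    _ = Gm k H := cv_cu_left _

lemma comul_antipode (h : H) :
    Coalgebra.comul (R := k) (HopfAlgebra.antipode (R := k) h) =
      TensorProduct.map (HopfAlgebra.antipode (R := k)) (HopfAlgebra.antipode (R := k))
        ((TensorProduct.comm k H H) (Coalgebra.comul h)) := by
  have := LinearMap.congr_fun (comul_antipode_map (k := k) (H := H)) h
  simpa only [comp_apply, LinearEquiv.coe_coe] using this

lemma counit_antipode (h : H) :
    Coalgebra.counit (R := k) (HopfAlgebra.antipode (R := k) h) = Coalgebra.counit (R := k) h := by
  set r := ℛ k h
  have e1 := sum_counit_smul_right (Coalgebra.counit (R := k) ∘ₗ HopfAlgebra.antipode (R := k)) h r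
  simp only [comp_apply, smul_eq_mul] at e1
  have e2 := congrArg (Coalgebra.counit (R := k) (A := H)) (sum_antipode_mul_eq_algebraMap_counit (R := k) r)
  simp only [map_sum, Bialgebra.counit_mul, Bialgebra.counit_algebraMap] at e2
  rw [← e1, ← e2]
  exact Finset.sum_congr rfl fun i _ => mul_comm _ _


section Helpers
variable {M₁ M₂ N₁ N₂ P₁ P₂ : Type u}
  [AddCommMonoid M₁] [AddCommMonoid M₂] [AddCommMonoid N₁] [AddCommMonoid N₂]
  [AddCommMonoid P₁] [AddCommMonoid P₂]
  [Module k M₁] [Module k M₂] [Module k N₁] [Module k N₂] [Module k P₁] [Module k P₂]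

lemma mapmap (f : N₁ →ₗ[k] P₁) (g : N₂ →ₗ[k] P₂) (f' : M₁ →ₗ[k] N₁) (g' : M₂ →ₗ[k] N₂)
    (x : M₁ ⊗[k] M₂) :
    TensorProduct.map f g (TensorProduct.map f' g' x) =
      TensorProduct.map (f ∘ₗ f') (g ∘ₗ g') x := by
  rw [TensorProduct.map_comp]; rfl

lemma comm_map_apply (f : M₁ →ₗ[k] N₁) (g : M₂ →ₗ[k] N₂) (x : M₁ ⊗[k] M₂) :
    TensorProduct.comm k N₁ N₂ (TensorProduct.map f g x) =
      TensorProduct.map g f (TensorProduct.comm k M₁ M₂ x) := by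
  induction x using TensorProduct.induction_on with
  | zero => simp
  | tmul => simp
  | add x y hx hy => simp [map_add, hx, hy]

lemma comm_comm_apply (x : M₁ ⊗[k] M₂) :
    TensorProduct.comm k M₂ M₁ (TensorProduct.comm k M₁ M₂ x) = x := by
  induction x using TensorProduct.induction_on with
  | zero => simp
  | tmul => simp
  | add x y hx hy => simp [map_add, hx, hy]

end Helpers

section Sbar
variable (Sbar : H →ₗ[k] H)

lemma counit_sbar (hS1 : ∀ h : H, HopfAlgebra.antipode (R := k) (Sbar h) = h) (h : H) :
    Coalgebra.counit (R := k) (Sbar h) = Coalgebra.counit (R := k) h := by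
  have := counit_antipode (k := k) (Sbar h)
  rw [hS1] at this
  exact this.symm

lemma comul_sbar (hS1 : ∀ h : H, HopfAlgebra.antipode (R := k) (Sbar h) = h)
    (hS2 : ∀ h : H, Sbar (HopfAlgebra.antipode (R := k) h) = h) (h : H) :
    Coalgebra.comul (R := k) (Sbar h) =
      TensorProduct.map Sbar Sbar ((TensorProduct.comm k H H) (Coalgebra.comul h)) := by
  have hSbarS : Sbar ∘ₗ HopfAlgebra.antipode (R := k) = LinearMap.id := LinearMap.ext hS2
  have h1 := comul_antipode (k := k) (Sbar h)
  rw [hS1] at h1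
  have h3 : (TensorProduct.comm k H H) (Coalgebra.comul (R := k) h) =
      TensorProduct.map (HopfAlgebra.antipode (R := k)) (HopfAlgebra.antipode (R := k))
        (Coalgebra.comul (R := k) (Sbar h)) := by
    rw [h1, comm_map_apply, comm_comm_apply]
  rw [h3, mapmap, hSbarS, TensorProduct.map_id]
  rfl

end Sbar

section Sweedler

lemma sweedler213_repr (h : H) (r : Coalgebra.Repr k h (H × H))
    (a₂ : (i : r.ι) → Coalgebra.Repr k (r.right i) (H × H)) :
    sweedler213 (k := k) (H := H) h =
      ∑ i ∈ r.index, ∑ m ∈ (a₂ i).index,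
        (a₂ i).left m ⊗ₜ[k] (r.left i ⊗ₜ[k] (a₂ i).right m) := by
  simp only [sweedler213, comp_apply, LinearEquiv.coe_coe]
  rw [← r.eq]
  simp only [map_sum, lTensor_tmul]
  refine Finset.sum_congr rfl fun i _ => ?_
  rw [← (a₂ i).eq, TensorProduct.tmul_sum]
  simp only [map_sum, TensorProduct.assoc_symm_tmul, rTensor_tmul, LinearEquiv.coe_coe,
    TensorProduct.comm_tmul, TensorProduct.assoc_tmul]

lemma sweedler_anti (T : H →ₗ[k] H)
    (hT : ∀ x : H, Coalgebra.comul (R := k) (T x) =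
      TensorProduct.map T T ((TensorProduct.comm k H H) (Coalgebra.comul x))) (h : H) :
    sweedler213 (k := k) (H := H) (T h) =
      TensorProduct.map T ((TensorProduct.comm k H H).toLinearMap ∘ₗ TensorProduct.map T T)
        (sweedler213 (k := k) (H := H) h) := by
  set r := ℛ k h
  set a₁ : (i : r.ι) → Coalgebra.Repr k (r.left i) (H × H) := fun i => ℛ k (r.left i) with ha₁
  set a₂ : (i : r.ι) → Coalgebra.Repr k (r.right i) (H × H) := fun i => ℛ k (r.right i) with ha₂
  have RHSexp : TensorProduct.map T
        ((TensorProduct.comm k H H).toLinearMap ∘ₗ TensorProduct.map T T)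
        (sweedler213 (k := k) (H := H) h) =
      ∑ i ∈ r.index, ∑ m ∈ (a₂ i).index,
        T ((a₂ i).left m) ⊗ₜ[k] (T ((a₂ i).right m) ⊗ₜ[k] T (r.left i)) := by
    rw [sweedler213_repr h r a₂]
    simp only [map_sum, TensorProduct.map_tmul, comp_apply, LinearEquiv.coe_coe,
      TensorProduct.comm_tmul]
  have LHSexp : sweedler213 (k := k) (H := H) (T h) =
      ∑ i ∈ r.index, ∑ j ∈ (a₁ i).index,
        T ((a₁ i).right j) ⊗ₜ[k] (T (r.right i) ⊗ₜ[k] T ((a₁ i).left j)) := by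
    simp only [sweedler213, comp_apply, LinearEquiv.coe_coe]
    rw [hT h, ← r.eq]
    simp only [map_sum, TensorProduct.comm_tmul, TensorProduct.map_tmul, lTensor_tmul]
    refine Finset.sum_congr rfl fun i _ => ?_
    rw [hT (r.left i), ← (a₁ i).eq]
    simp only [map_sum, TensorProduct.comm_tmul, TensorProduct.map_tmul,
      TensorProduct.tmul_sum, TensorProduct.assoc_symm_tmul, rTensor_tmul,
      LinearEquiv.coe_coe, TensorProduct.assoc_tmul]
  have key := congrArg (TensorProduct.map T (TensorProduct.map T T) ∘ₗ
      (TensorProduct.assoc k H H H).toLinearMap ∘ₗ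
      (TensorProduct.comm k H (H ⊗[k] H)).toLinearMap)
    (sum_tmul_tmul_eq r a₁ a₂)
  simp only [map_sum, comp_apply, LinearEquiv.coe_coe, TensorProduct.comm_tmul,
    TensorProduct.assoc_tmul, TensorProduct.map_tmul] at key
  rw [LHSexp, RHSexp]
  exact key

end Sweedler

end Aux
end


/-- Proposition 2.1: for a right `H`-comodule algebra `A` over a Hopf algebra
`H` with bijective antipode `S` (inverse `S̄`), the assignment `γ(f') = f' ∘ S` is an isomorphism
of `k`-linear categories `C'_A → C_A`, the identity on objects, with inverse `f ↦ f ∘ S̄`; in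
particular it maps each hom-module `C'_A(i,j)` bijectively onto `C_A(i,j)` and satisfies
`γ(f' ⋆ g') = γ(f') * γ(g')`. -/
theorem stmt0_gamma_category_isomorphism
    {k H A : Type u} [CommRing k] [Ring H] [HopfAlgebra k H] [Ring A] [Algebra k A]
    (ρ : A →ₐ[k] A ⊗[k] H) (hρ : IsCoaction ρ.toLinearMap)
    (Sbar : H →ₗ[k] H)
    (hS1 : ∀ h, HopfAlgebra.antipode (R := k) (Sbar h) = h)
    (hS2 : ∀ h, Sbar (HopfAlgebra.antipode (R := k) h) = h) :
    -- `γ` maps each hom-module of `C'_A` into the corresponding hom-module of `C_A`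
    (∀ v' : H →ₗ[k] A, memC11 ρ.toLinearMap v' →
        memC11 ρ.toLinearMap (v' ∘ₗ HopfAlgebra.antipode (R := k))) ∧
    (∀ t' : H →ₗ[k] A, memC21 ρ.toLinearMap t' →
        memC12 ρ.toLinearMap (t' ∘ₗ HopfAlgebra.antipode (R := k))) ∧
    (∀ u' : H →ₗ[k] A, memC'21 ρ.toLinearMap Sbar u' →
        memC21 ρ.toLinearMap (u' ∘ₗ HopfAlgebra.antipode (R := k))) ∧
    (∀ w' : H →ₗ[k] A, memC'22 ρ.toLinearMap Sbar w' →
        memC22 ρ.toLinearMap (w' ∘ₗ HopfAlgebra.antipode (R := k))) ∧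
    -- the inverse functor `f ↦ f ∘ S̄` maps each hom-module of `C_A` into that of `C'_A`
    (∀ v : H →ₗ[k] A, memC11 ρ.toLinearMap v → memC11 ρ.toLinearMap (v ∘ₗ Sbar)) ∧
    (∀ u : H →ₗ[k] A, memC12 ρ.toLinearMap u → memC21 ρ.toLinearMap (u ∘ₗ Sbar)) ∧
    (∀ t : H →ₗ[k] A, memC21 ρ.toLinearMap t → memC'21 ρ.toLinearMap Sbar (t ∘ₗ Sbar)) ∧
    (∀ w : H →ₗ[k] A, memC22 ρ.toLinearMap w → memC'22 ρ.toLinearMap Sbar (w ∘ₗ Sbar)) ∧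
    -- the two functors are mutually inverse (hence `γ` is bijective on each hom-module)
    (∀ f : H →ₗ[k] A, (f ∘ₗ HopfAlgebra.antipode (R := k)) ∘ₗ Sbar = f) ∧
    (∀ f : H →ₗ[k] A, (f ∘ₗ Sbar) ∘ₗ HopfAlgebra.antipode (R := k) = f) ∧
    -- `γ` is functorial: `γ(g' ⋆ f') = γ(g') * γ(f')`
    (∀ f' g' : H →ₗ[k] A,
        (convOp g' f') ∘ₗ HopfAlgebra.antipode (R := k) =
          conv (g' ∘ₗ HopfAlgebra.antipode (R := k)) (f' ∘ₗ HopfAlgebra.antipode (R := k))) ∧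
    -- `γ` preserves the identity morphisms `η ∘ ε`
    ((Algebra.linearMap k A ∘ₗ Coalgebra.counit (R := k) (A := H)) ∘ₗ
          HopfAlgebra.antipode (R := k) =
        Algebra.linearMap k A ∘ₗ Coalgebra.counit (R := k) (A := H)) := by
  classical
  have hSbarS : Sbar ∘ₗ HopfAlgebra.antipode (R := k) = LinearMap.id := LinearMap.ext hS2
  have hSSbar : HopfAlgebra.antipode (R := k) ∘ₗ Sbar = LinearMap.id := LinearMap.ext hS1
  have hcomp4 : ((LinearMap.mul' k H) ∘ₗ
        (TensorProduct.map LinearMap.id Sbar) ∘ₗ (TensorProduct.comm k H H).toLinearMap) ∘ₗ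
      ((TensorProduct.comm k H H).toLinearMap ∘ₗ
        TensorProduct.map (HopfAlgebra.antipode (R := k)) (HopfAlgebra.antipode (R := k))) =
      (LinearMap.mul' k H) ∘ₗ
        TensorProduct.map (HopfAlgebra.antipode (R := k)) LinearMap.id := by
    apply TensorProduct.ext'
    intro x y
    simp [hS2]
  have hcomp8 : ((LinearMap.mul' k H) ∘ₗ
        TensorProduct.map (HopfAlgebra.antipode (R := k)) LinearMap.id) ∘ₗ
      ((TensorProduct.comm k H H).toLinearMap ∘ₗ TensorProduct.map Sbar Sbar) =
      (LinearMap.mul' k H) ∘ₗ (TensorProduct.map LinearMap.id Sbar) ∘ₗ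
        (TensorProduct.comm k H H).toLinearMap := by
    apply TensorProduct.ext'
    intro x y
    simp [hS1]
  refine ⟨?_, ?_, ?_, ?_, ?_, ?_, ?_, ?_, ?_, ?_, ?_, ?_⟩
  · intro v' hv h
    simp only [comp_apply]
    exact hv _
  · intro t' ht h
    simp only [comp_apply]
    rw [ht (HopfAlgebra.antipode (R := k) h), Aux.comul_antipode (k := k) h, Aux.mapmap,
      id_comp]
  · intro u' hu h
    simp only [comp_apply]
    rw [hu (HopfAlgebra.antipode (R := k) h), Aux.comul_antipode (k := k) h,
      Aux.comm_map_apply, Aux.comm_comm_apply, Aux.mapmap, hSbarS]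
  · intro w' hw h
    simp only [comp_apply]
    rw [hw (HopfAlgebra.antipode (R := k) h),
      Aux.sweedler_anti (HopfAlgebra.antipode (R := k)) (Aux.comul_antipode (k := k)) h,
      Aux.mapmap, hcomp4]
  · intro v hv h
    simp only [comp_apply]
    exact hv _
  · intro u hu h
    simp only [comp_apply]
    rw [hu (Sbar h), Aux.comul_sbar Sbar hS1 hS2 h, Aux.comm_map_apply, Aux.comm_comm_apply,
      Aux.mapmap, hSSbar]
  · intro t ht h
    simp only [comp_apply]
    rw [ht (Sbar h), Aux.comul_sbar Sbar hS1 hS2 h, Aux.mapmap, id_comp]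
  · intro w hw h
    simp only [comp_apply]
    rw [hw (Sbar h), Aux.sweedler_anti Sbar (Aux.comul_sbar Sbar hS1 hS2) h, Aux.mapmap,
      hcomp8]
  · intro f
    apply LinearMap.ext
    intro h
    simp only [comp_apply, hS1]
  · intro f
    apply LinearMap.ext
    intro h
    simp only [comp_apply, hS2]
  · intro f' g'
    apply LinearMap.ext
    intro h
    simp only [conv, convOp, comp_apply, LinearEquiv.coe_coe]
    rw [Aux.comul_antipode (k := k) h, Aux.comm_map_apply, Aux.comm_comm_apply, Aux.mapmap]
  · apply LinearMap.ext
    intro h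
    simp only [comp_apply]
    rw [Aux.counit_antipode]
end

section
/- Let H be a cocommutative Hopf algebra, A a cleft right H-comodule algebra whose coinvariant algebra B=A^{coH} is commutative. For a convolution invertible t∈Hom^H(H,A) with convolution inverse u, define ω_t: H⊗B→B by ω_t(h⊗b)=t(h_(1))b u(h_(2)). Then ω_t indeed takes values in B, is independent of the choice of the convolution invertible H-colinear map t, and makes B into a left H-module algebra. -/
open TensorProduct Coalgebra HopfAlgebra LinearMap

noncomputable section ConvAux

section GenericAux
variable {k : Type u} [CommRing k]
variable {C : Type u} [AddCommGroup C] [Module k C] [Coalgebra k C]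
variable {D : Type u} [Ring D] [Algebra k D]
variable {E : Type u} [Ring E] [Algebra k E]

def cv (f g : C →ₗ[k] D) : C →ₗ[k] D :=
  (LinearMap.mul' k D) ∘ₗ (TensorProduct.map f g) ∘ₗ Coalgebra.comul

def cvone : C →ₗ[k] D := Algebra.linearMap k D ∘ₗ Coalgebra.counit

theorem cv_apply_repr (f g : C →ₗ[k] D) {c : C} {ι_r : Type*} (r : Coalgebra.Repr k c ι_r) :
    cv f g c = ∑ i ∈ r.index, f (r.left i) * g (r.right i) := by
  simp [cv, ← r.eq, map_sum]

theorem cvone_apply (c : C) : (cvone (k := k) (C := C) (D := D)) c =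
    algebraMap k D (counit (R := k) c) := rfl

theorem counit_smul_right_sum {c : C} {ι_r : Type*} (r : Coalgebra.Repr k c ι_r) :
    ∑ i ∈ r.index, (counit (R := k) (r.left i)) • r.right i = c := by
  have h := Coalgebra.sum_counit_tmul_eq (R := k) r
  have := congrArg (TensorProduct.lid k C) h
  rw [map_sum] at this
  simpa using this

theorem counit_smul_left_sum {c : C} {ι_r : Type*} (r : Coalgebra.Repr k c ι_r) :
    ∑ i ∈ r.index, (counit (R := k) (r.right i)) • r.left i = c := by
  have h := Coalgebra.sum_tmul_counit_eq (R := k) r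
  have := congrArg (TensorProduct.rid k C) h
  rw [map_sum] at this
  simpa using this

theorem cv_cvone_left (f : C →ₗ[k] D) : cv cvone f = f := by
  ext c
  rw [cv_apply_repr _ _ (ℛ k c)]
  have : ∀ i ∈ (ℛ k c).index, cvone (k := k) ((ℛ k c).left i) * f ((ℛ k c).right i)
      = f ((counit (R := k) ((ℛ k c).left i)) • (ℛ k c).right i) := by
    intro i _
    rw [cvone_apply, ← Algebra.smul_def, map_smul]
  rw [Finset.sum_congr rfl this, ← map_sum, counit_smul_right_sum]

theorem cv_cvone_right (f : C →ₗ[k] D) : cv f cvone = f := by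
  ext c
  rw [cv_apply_repr _ _ (ℛ k c)]
  have : ∀ i ∈ (ℛ k c).index, f ((ℛ k c).left i) * cvone (k := k) ((ℛ k c).right i)
      = f ((counit (R := k) ((ℛ k c).right i)) • (ℛ k c).left i) := by
    intro i _
    rw [cvone_apply, ← Algebra.commutes, ← Algebra.smul_def, map_smul]
  rw [Finset.sum_congr rfl this, ← map_sum, counit_smul_left_sum]

theorem cv_assoc (f g h : C →ₗ[k] D) : cv (cv f g) h = cv f (cv g h) := by
  ext c
  set r := ℛ k c with hr
  have key := congrArg
    ((LinearMap.mul' k D) ∘ₗ (TensorProduct.map f ((LinearMap.mul' k D) ∘ₗ TensorProduct.map g h)))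
    (Coalgebra.coassoc_apply (R := k) c)
  -- LHS of key
  have lhs : ((LinearMap.mul' k D) ∘ₗ (TensorProduct.map f ((LinearMap.mul' k D) ∘ₗ TensorProduct.map g h)))
      ((TensorProduct.assoc k C C C) ((Coalgebra.comul (R := k)).rTensor C (Coalgebra.comul (R := k) c)))
      = ∑ i ∈ r.index, (cv f g) (r.left i) * h (r.right i) := by
    rw [← r.eq, map_sum, map_sum, map_sum]
    apply Finset.sum_congr rfl
    intro i _
    rw [rTensor_tmul, ← (ℛ k (r.left i)).eq]
    simp [TensorProduct.sum_tmul, map_sum, cv_apply_repr f g (ℛ k (r.left i)),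
      Finset.sum_mul, mul_assoc]
  have rhs : ((LinearMap.mul' k D) ∘ₗ (TensorProduct.map f ((LinearMap.mul' k D) ∘ₗ TensorProduct.map g h)))
      ((Coalgebra.comul (R := k)).lTensor C (Coalgebra.comul (R := k) c))
      = ∑ i ∈ r.index, f (r.left i) * (cv g h) (r.right i) := by
    rw [← r.eq, map_sum, map_sum]
    apply Finset.sum_congr rfl
    intro i _
    rw [lTensor_tmul, ← (ℛ k (r.right i)).eq]
    simp [TensorProduct.tmul_sum, map_sum, cv_apply_repr g h (ℛ k (r.right i)),
      Finset.mul_sum]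
  rw [cv_apply_repr (cv f g) h r, cv_apply_repr f (cv g h) r, ← lhs, ← rhs, key]

theorem cv_cancel (p q x : C →ₗ[k] D) (h : cv p q = cvone) : cv p (cv q x) = x := by
  rw [← cv_assoc, h, cv_cvone_left]

theorem cv_unique {f g g' : C →ₗ[k] D} (h1 : cv f g = cvone) (h2 : cv g' f = cvone) :
    g' = g := by
  have : cv g' (cv f g) = g' := by rw [h1, cv_cvone_right]
  rw [← cv_assoc, h2, cv_cvone_left] at this
  exact this.symm

theorem cv_comm (hcoc : ∀ c : C, (TensorProduct.comm k C C) (Coalgebra.comul (R := k) c)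
      = Coalgebra.comul (R := k) c)
    {f g : C →ₗ[k] D} (hcomm : ∀ x y, f x * g y = g y * f x) : cv f g = cv g f := by
  ext c
  rw [cv_apply_repr g f (ℛ k c)]
  have h1 : cv f g c = (LinearMap.mul' k D) ((TensorProduct.map f g)
      ((TensorProduct.comm k C C) (Coalgebra.comul (R := k) c))) := by
    rw [hcoc]; rfl
  rw [h1, ← (ℛ k c).eq]
  simp only [map_sum, TensorProduct.comm_tmul, TensorProduct.map_tmul, LinearMap.mul'_apply]
  exact Finset.sum_congr rfl fun i _ => hcomm _ _

theorem alghom_comp_cv (φ : D →ₐ[k] E) (f g : C →ₗ[k] D) :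
    φ.toLinearMap ∘ₗ cv f g = cv (φ.toLinearMap ∘ₗ f) (φ.toLinearMap ∘ₗ g) := by
  ext c
  simp only [LinearMap.comp_apply, AlgHom.toLinearMap_apply]
  rw [cv_apply_repr f g (ℛ k c), cv_apply_repr _ _ (ℛ k c), map_sum]
  exact Finset.sum_congr rfl fun i _ => map_mul φ _ _

theorem alghom_comp_cvone (φ : D →ₐ[k] E) :
    φ.toLinearMap ∘ₗ (cvone (k := k) (C := C) (D := D)) = cvone := by
  ext c
  simp [cvone, AlgHom.commutes]

theorem cv_mem (S : Subalgebra k D) {f g : C →ₗ[k] D}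
    (hf : ∀ x, f x ∈ S) (hg : ∀ x, g x ∈ S) : ∀ x, cv f g x ∈ S := by
  intro x
  rw [cv_apply_repr f g (ℛ k x)]
  exact Subalgebra.sum_mem S fun i _ => S.mul_mem (hf _) (hg _)

theorem cv_eta_left (b : D) (f : C →ₗ[k] D) :
    cv ((Coalgebra.counit (R := k)).smulRight b) f = (LinearMap.mulLeft k b) ∘ₗ f := by
  ext c
  rw [cv_apply_repr _ _ (ℛ k c)]
  have : ∀ i ∈ (ℛ k c).index,
      ((Coalgebra.counit (R := k)).smulRight b) ((ℛ k c).left i) * f ((ℛ k c).right i)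
      = b * f ((counit (R := k) ((ℛ k c).left i)) • (ℛ k c).right i) := by
    intro i _
    simp [smul_mul_assoc, mul_smul_comm]
  rw [Finset.sum_congr rfl this, ← Finset.mul_sum, ← map_sum, counit_smul_right_sum]
  rfl

theorem eta_cv_eta (b c : D) :
    cv ((Coalgebra.counit (R := k) (A := C)).smulRight b) ((Coalgebra.counit (R := k)).smulRight c)
      = (Coalgebra.counit (R := k)).smulRight (b * c) := by
  rw [cv_eta_left]
  ext x
  simp [mul_smul_comm]

theorem cv_add_right (f g g' : C →ₗ[k] D) : cv f (g + g') = cv f g + cv f g' := by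
  unfold cv
  rw [TensorProduct.map_add_right]
  ext c
  simp

theorem cv_smul_right (s : k) (f g : C →ₗ[k] D) : cv f (s • g) = s • cv f g := by
  unfold cv
  rw [TensorProduct.map_smul_right]
  ext c
  simp

theorem cv_add_left (f f' g : C →ₗ[k] D) : cv (f + f') g = cv f g + cv f' g := by
  unfold cv
  rw [TensorProduct.map_add_left]
  ext c
  simp

theorem cv_smul_left (s : k) (f g : C →ₗ[k] D) : cv (s • f) g = s • cv f g := by
  unfold cv
  rw [TensorProduct.map_smul_left]
  ext c
  simp

def sp (f : C →ₗ[k] D) (g : C →ₗ[k] E) : C →ₗ[k] (D ⊗[k] E) :=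
  cv ((Algebra.TensorProduct.includeLeft (R := k) (A := D) (B := E)).toLinearMap ∘ₗ f)
     ((Algebra.TensorProduct.includeRight (R := k) (A := D) (B := E)).toLinearMap ∘ₗ g)

theorem sp_mul (hcoc : ∀ c : C, (TensorProduct.comm k C C) (Coalgebra.comul (R := k) c)
      = Coalgebra.comul (R := k) c) (f f' : C →ₗ[k] D) (g g' : C →ₗ[k] E) :
    cv (sp f g) (sp f' g') = sp (cv f f') (cv g g') := by
  unfold sp
  have hswap : cv ((Algebra.TensorProduct.includeRight (R := k) (A := D)).toLinearMap ∘ₗ g)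
      ((Algebra.TensorProduct.includeLeft (R := k) (A := D) (B := E)).toLinearMap ∘ₗ f')
      = cv ((Algebra.TensorProduct.includeLeft (R := k) (A := D) (B := E)).toLinearMap ∘ₗ f')
      ((Algebra.TensorProduct.includeRight (R := k) (A := D)).toLinearMap ∘ₗ g) := by
    apply cv_comm hcoc
    intro x y
    simp [Algebra.TensorProduct.tmul_mul_tmul]
  rw [cv_assoc, ← cv_assoc _ _ ((Algebra.TensorProduct.includeRight (R := k) (A := D)).toLinearMap ∘ₗ g'),
    hswap, cv_assoc, ← cv_assoc, ← alghom_comp_cv, ← alghom_comp_cv]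

theorem sp_cvone_right (f : C →ₗ[k] D) :
    sp (E := E) f cvone = (Algebra.TensorProduct.includeLeft (R := k) (A := D) (B := E)).toLinearMap ∘ₗ f := by
  unfold sp
  rw [alghom_comp_cvone, cv_cvone_right]

theorem sp_cvone_left (g : C →ₗ[k] E) :
    sp (D := D) cvone g = (Algebra.TensorProduct.includeRight (R := k) (A := D) (B := E)).toLinearMap ∘ₗ g := by
  unfold sp
  rw [alghom_comp_cvone, cv_cvone_left]

theorem sp_cvone_cvone :
    sp (k := k) (C := C) (D := D) (E := E) cvone cvone = cvone := by
  rw [sp_cvone_right, alghom_comp_cvone]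
theorem sp_apply_repr (f : C →ₗ[k] D) (g : C →ₗ[k] E) {c : C} {ι_r : Type*} (r : Coalgebra.Repr k c ι_r) :
    sp f g c = ∑ i ∈ r.index, f (r.left i) ⊗ₜ[k] g (r.right i) := by
  rw [sp, cv_apply_repr _ _ r]
  apply Finset.sum_congr rfl
  intro i _
  simp [Algebra.TensorProduct.includeLeft_apply, Algebra.TensorProduct.includeRight_apply,
    Algebra.TensorProduct.tmul_mul_tmul]

end GenericAux

section HopfAux
variable {k : Type u} [CommRing k]
variable {H : Type u} [Ring H] [HopfAlgebra k H]
variable {A : Type u} [Ring A] [Algebra k A]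
variable {D : Type u} [Ring D] [Algebra k D]
variable {E : Type u} [Ring E] [Algebra k E]

theorem cv_id_antipode : cv (k := k) (LinearMap.id (M := H)) (HopfAlgebra.antipode (R := k)) = cvone := by
  unfold cv cvone
  rw [show TensorProduct.map LinearMap.id (HopfAlgebra.antipode (R := k) (A := H))
    = (HopfAlgebra.antipode (R := k) (A := H)).lTensor H from rfl]
  exact HopfAlgebra.mul_antipode_lTensor_comul

theorem cv_antipode_id : cv (k := k) (HopfAlgebra.antipode (R := k)) (LinearMap.id (M := H)) = cvone := by
  unfold cv cvone
  rw [show TensorProduct.map (HopfAlgebra.antipode (R := k) (A := H)) LinearMap.id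
    = (HopfAlgebra.antipode (R := k) (A := H)).rTensor H from rfl]
  exact HopfAlgebra.mul_antipode_rTensor_comul

theorem comul_tmul_repr (h h' : H) {ι_r : Type*} (r : Coalgebra.Repr k h ι_r) {ι_r' : Type*} (r' : Coalgebra.Repr k h' ι_r') :
    Coalgebra.comul (R := k) (h ⊗ₜ[k] h') =
      ∑ i ∈ r.index, ∑ j ∈ r'.index,
        (r.left i ⊗ₜ[k] r'.left j) ⊗ₜ[k] (r.right i ⊗ₜ[k] r'.right j) := by
  rw [TensorProduct.comul_def]
  simp only [LinearMap.comp_apply, TensorProduct.AlgebraTensorModule.map_tmul, LinearEquiv.coe_coe]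
  rw [← r.eq, ← r'.eq, TensorProduct.sum_tmul, map_sum]
  apply Finset.sum_congr rfl
  intro i _
  rw [TensorProduct.tmul_sum, map_sum]
  apply Finset.sum_congr rfl
  intro j _
  simp

theorem cv_tmul_repr {D : Type u} [Ring D] [Algebra k D] (F G : H ⊗[k] H →ₗ[k] D)
    (h h' : H) {ι_r : Type*} (r : Coalgebra.Repr k h ι_r) {ι_r' : Type*} (r' : Coalgebra.Repr k h' ι_r') :
    cv F G (h ⊗ₜ[k] h') = ∑ i ∈ r.index, ∑ j ∈ r'.index,
      F (r.left i ⊗ₜ[k] r'.left j) * G (r.right i ⊗ₜ[k] r'.right j) := by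
  unfold cv
  simp only [LinearMap.comp_apply]
  rw [comul_tmul_repr h h' r r']
  simp [map_sum]

theorem repr_swap (hcoc : ∀ h : H, (TensorProduct.comm k H H) (Coalgebra.comul (R := k) h) =
      Coalgebra.comul (R := k) h) {h : H} {ι_r : Type*} (r : Coalgebra.Repr k h ι_r) :
    ∑ i ∈ r.index, r.right i ⊗ₜ[k] r.left i = ∑ i ∈ r.index, r.left i ⊗ₜ[k] r.right i := by
  have : (TensorProduct.comm k H H) (Coalgebra.comul (R := k) h)
      = ∑ i ∈ r.index, r.right i ⊗ₜ[k] r.left i := by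
    rw [← r.eq, map_sum]; simp
  rw [← this, hcoc, ← r.eq]

theorem cocomm_tensor (hcoc : ∀ h : H, (TensorProduct.comm k H H) (Coalgebra.comul (R := k) h) =
      Coalgebra.comul (R := k) h) :
    ∀ c : H ⊗[k] H, (TensorProduct.comm k (H ⊗[k] H) (H ⊗[k] H)) (Coalgebra.comul (R := k) c)
      = Coalgebra.comul (R := k) c := by
  intro c
  induction c using TensorProduct.induction_on with
  | zero => simp
  | add x y hx hy => rw [map_add, map_add, hx, hy]
  | tmul h h' =>
    set r := ℛ k h
    set r' := ℛ k h'
    rw [comul_tmul_repr h h' r r']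
    simp only [map_sum, TensorProduct.comm_tmul]
    have key : ∀ (w : H ⊗[k] H) (w' : H ⊗[k] H), ∀ (hw : w = ∑ i ∈ r.index, r.right i ⊗ₜ[k] r.left i)
      (hw' : w' = ∑ j ∈ r'.index, r'.right j ⊗ₜ[k] r'.left j), True := fun _ _ _ _ => trivial
    have expand : ∀ (w w' : H ⊗[k] H),
        (TensorProduct.tensorTensorTensorComm k H H H H) (w ⊗ₜ[k] w') =
        (TensorProduct.tensorTensorTensorComm k H H H H) (w ⊗ₜ[k] w') := fun _ _ => rfl
    calc ∑ i ∈ r.index, ∑ j ∈ r'.index,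
          ((r.right i ⊗ₜ[k] r'.right j) ⊗ₜ[k] (r.left i ⊗ₜ[k] r'.left j) :
            (H ⊗[k] H) ⊗[k] (H ⊗[k] H))
        = (TensorProduct.tensorTensorTensorComm k H H H H)
            ((∑ i ∈ r.index, r.right i ⊗ₜ[k] r.left i) ⊗ₜ[k]
             (∑ j ∈ r'.index, r'.right j ⊗ₜ[k] r'.left j)) := by
          rw [TensorProduct.sum_tmul, map_sum]
          apply Finset.sum_congr rfl; intro i _
          rw [TensorProduct.tmul_sum, map_sum]
          apply Finset.sum_congr rfl; intro j _
          simp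
      _ = (TensorProduct.tensorTensorTensorComm k H H H H)
            ((∑ i ∈ r.index, r.left i ⊗ₜ[k] r.right i) ⊗ₜ[k]
             (∑ j ∈ r'.index, r'.left j ⊗ₜ[k] r'.right j)) := by
          rw [repr_swap hcoc r, repr_swap hcoc r']
      _ = ∑ i ∈ r.index, ∑ j ∈ r'.index,
            (r.left i ⊗ₜ[k] r'.left j) ⊗ₜ[k] (r.right i ⊗ₜ[k] r'.right j) := by
          rw [TensorProduct.sum_tmul, map_sum]
          apply Finset.sum_congr rfl; intro i _
          rw [TensorProduct.tmul_sum, map_sum]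
          apply Finset.sum_congr rfl; intro j _
          simp

theorem counit_tmul (h h' : H) : Coalgebra.counit (R := k) (h ⊗ₜ[k] h')
    = Coalgebra.counit (R := k) h * Coalgebra.counit (R := k) h' := by
  rw [TensorProduct.counit_def]; simp [mul_comm]

theorem cvone_tensor_apply (h h' : H) : (cvone (k := k) (C := H ⊗[k] H) (D := D)) (h ⊗ₜ[k] h')
    = algebraMap k D (Coalgebra.counit (R := k) h * Coalgebra.counit (R := k) h') := by
  rw [cvone]; simp [_root_.counit_tmul, mul_comm]

theorem cv_mu (f g : H →ₗ[k] D) :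
    cv (f ∘ₗ LinearMap.mul' k H) (g ∘ₗ LinearMap.mul' k H) = (cv f g) ∘ₗ LinearMap.mul' k H := by
  apply TensorProduct.ext'
  intro h h'
  rw [cv_tmul_repr _ _ h h' (ℛ k h) (ℛ k h')]
  have : (cv f g ∘ₗ LinearMap.mul' k H) (h ⊗ₜ[k] h') = cv f g (h * h') := by simp
  rw [this]
  have hcm : Coalgebra.comul (R := k) (h * h') =
      ∑ i ∈ (ℛ k h).index, ∑ j ∈ (ℛ k h').index,
        ((ℛ k h).left i * (ℛ k h').left j) ⊗ₜ[k] ((ℛ k h).right i * (ℛ k h').right j) := by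
    rw [Bialgebra.comul_mul, ← (ℛ k h).eq, ← (ℛ k h').eq, Finset.sum_mul_sum]
    apply Finset.sum_congr rfl; intro i _
    apply Finset.sum_congr rfl; intro j _
    rw [Algebra.TensorProduct.tmul_mul_tmul]
  rw [show cv f g (h * h') = (LinearMap.mul' k D) ((TensorProduct.map f g)
    (Coalgebra.comul (R := k) (h*h'))) from rfl, hcm]
  simp [map_sum]

theorem cvone_mu : (cvone (k := k) (C := H) (D := D)) ∘ₗ LinearMap.mul' k H
    = cvone (k := k) (C := H ⊗[k] H) (D := D) := by
  apply TensorProduct.ext'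
  intro h h'
  simp [cvone_tensor_apply, cvone, mul_comm]

theorem eta_mu (b : D) : ((Coalgebra.counit (R := k) (A := H)).smulRight b) ∘ₗ LinearMap.mul' k H
    = (Coalgebra.counit (R := k) (A := H ⊗[k] H)).smulRight b := by
  apply TensorProduct.ext'
  intro h h'
  simp [_root_.counit_tmul, mul_comm]

theorem antipode_one' : HopfAlgebra.antipode (R := k) (1 : H) = 1 := by
  have := HopfAlgebra.mul_antipode_rTensor_comul_apply (R := k) (1 : H)
  rw [Bialgebra.comul_one] at this
  rw [show (1 : H ⊗[k] H) = (1:H) ⊗ₜ[k] (1:H) from Algebra.TensorProduct.one_def] at this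
  simpa using this

theorem antipode_mul' (x y : H) : HopfAlgebra.antipode (R := k) (x * y)
    = HopfAlgebra.antipode (R := k) y * HopfAlgebra.antipode (R := k) x := by
  have hid : (LinearMap.id (M := H)) ∘ₗ LinearMap.mul' k H = LinearMap.mul' k H := by rfl
  -- ν := S ∘ μ, ξ (x ⊗ y) = S y * S x
  set S := HopfAlgebra.antipode (R := k) (A := H) with hS
  set ν : H ⊗[k] H →ₗ[k] H := S ∘ₗ LinearMap.mul' k H with hν
  set ξ : H ⊗[k] H →ₗ[k] H :=
    ((LinearMap.mul' k H) ∘ₗ TensorProduct.map S S) ∘ₗ (TensorProduct.comm k H H).toLinearMap with hξ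
  have hSid : cv S LinearMap.id = cvone (k := k) (C := H) (D := H) := by
    unfold cv cvone
    rw [show TensorProduct.map S LinearMap.id = S.rTensor H from rfl]
    exact HopfAlgebra.mul_antipode_rTensor_comul
  have hidS : cv LinearMap.id S = cvone (k := k) (C := H) (D := H) := by
    unfold cv cvone
    rw [show TensorProduct.map LinearMap.id S = S.lTensor H from rfl]
    exact HopfAlgebra.mul_antipode_lTensor_comul
  have hνμ : cv ν (LinearMap.mul' k H) = cvone := by
    have h2 := cv_mu (k := k) S (LinearMap.id (M := H))
    rw [hid] at h2
    rw [hν, h2, hSid, cvone_mu]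
  have hμξ : cv (LinearMap.mul' k H) ξ = cvone := by
    apply TensorProduct.ext'
    intro h h'
    rw [cv_tmul_repr _ _ h h' (ℛ k h) (ℛ k h'), cvone_tensor_apply]
    have : ∀ i ∈ (ℛ k h).index, ∀ j ∈ (ℛ k h').index,
        (LinearMap.mul' k H) ((ℛ k h).left i ⊗ₜ[k] (ℛ k h').left j) *
          ξ ((ℛ k h).right i ⊗ₜ[k] (ℛ k h').right j)
        = (ℛ k h).left i * (((ℛ k h').left j * S ((ℛ k h').right j)) * S ((ℛ k h).right i)) := by
      intro i _ j _
      simp only [hξ, LinearMap.comp_apply, LinearEquiv.coe_coe, TensorProduct.comm_tmul,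
        TensorProduct.map_tmul, LinearMap.mul'_apply]
      noncomm_ring
    calc ∑ i ∈ (ℛ k h).index, ∑ j ∈ (ℛ k h').index,
          (LinearMap.mul' k H) ((ℛ k h).left i ⊗ₜ[k] (ℛ k h').left j) *
            ξ ((ℛ k h).right i ⊗ₜ[k] (ℛ k h').right j)
        = ∑ i ∈ (ℛ k h).index, (ℛ k h).left i *
            ((∑ j ∈ (ℛ k h').index, (ℛ k h').left j * S ((ℛ k h').right j)) * S ((ℛ k h).right i)) := by
          apply Finset.sum_congr rfl; intro i hi
          rw [Finset.sum_mul, Finset.mul_sum]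
          exact Finset.sum_congr rfl fun j hj => this i hi j hj
      _ = algebraMap k H (Coalgebra.counit (R := k) h * Coalgebra.counit (R := k) h') := by
          rw [HopfAlgebra.sum_mul_antipode_eq_algebraMap_counit (ℛ k h')]
          have : ∀ i ∈ (ℛ k h).index, (ℛ k h).left i *
              (algebraMap k H (Coalgebra.counit (R := k) h') * S ((ℛ k h).right i))
              = algebraMap k H (Coalgebra.counit (R := k) h') *
                ((ℛ k h).left i * S ((ℛ k h).right i)) := by
            intro i _
            rw [← mul_assoc, ← Algebra.commutes, mul_assoc]
          rw [Finset.sum_congr rfl this, ← Finset.mul_sum,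
            HopfAlgebra.sum_mul_antipode_eq_algebraMap_counit (ℛ k h), ← map_mul, mul_comm]
  have hμν : cv (LinearMap.mul' k H) ν = cvone := by
    have h2 := cv_mu (k := k) (LinearMap.id (M := H)) S
    rw [hid] at h2
    rw [hν, h2, hidS, cvone_mu]
  have : ξ = ν := by
    have h1 : cv ν (cv (LinearMap.mul' k H) ξ) = ν := by rw [hμξ, cv_cvone_right]
    rw [← cv_assoc, hνμ, cv_cvone_left] at h1
    exact h1
  have := congrArg (fun F : H ⊗[k] H →ₗ[k] H => F (x ⊗ₜ[k] y)) this.symm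
  simpa [hν, hξ] using this

theorem smulRight_add (b c : D) : (Coalgebra.counit (R := k) (A := H)).smulRight (b + c)
    = (Coalgebra.counit (R := k) (A := H)).smulRight b
      + (Coalgebra.counit (R := k) (A := H)).smulRight c := by
  ext x; simp [smul_add]

theorem smulRight_smul (s : k) (b : D) : (Coalgebra.counit (R := k) (A := H)).smulRight (s • b)
    = s • (Coalgebra.counit (R := k) (A := H)).smulRight b := by
  ext x
  simp only [LinearMap.smulRight_apply, LinearMap.smul_apply]
  rw [smul_comm]

theorem smulRight_one_eq : (Coalgebra.counit (R := k) (A := H)).smulRight (1 : D) = cvone := by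
  ext x; simp [cvone, Algebra.algebraMap_eq_smul_one]

theorem comul_one_tmul : Coalgebra.comul (R := k) (1 : H) = (1 : H) ⊗ₜ[k] (1 : H) := by
  rw [Bialgebra.comul_one]; exact Algebra.TensorProduct.one_def

theorem cv_apply_one (f g : H →ₗ[k] D) : cv f g (1 : H) = f 1 * g 1 := by
  rw [show cv f g (1 : H) = (LinearMap.mul' k D) ((TensorProduct.map f g)
    (Coalgebra.comul (R := k) (1 : H))) from rfl, comul_one_tmul]
  simp


theorem sp_apply_one {D : Type u} [Ring D] [Algebra k D] {E : Type u} [Ring E] [Algebra k E]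
    (f : H →ₗ[k] D) (g : H →ₗ[k] E) : sp f g (1 : H) = f 1 ⊗ₜ[k] g 1 := by
  rw [sp, cv_apply_one]
  simp [Algebra.TensorProduct.tmul_mul_tmul]


end HopfAux

end ConvAux

noncomputable section OmAux

variable {k : Type u} [CommRing k]
variable {H : Type u} [Ring H] [HopfAlgebra k H]
variable {A : Type u} [Ring A] [Algebra k A]

theorem mem_coinv {ρ : A →ₐ[k] A ⊗[k] H} {a : A} : a ∈ coinv ρ ↔ ρ a = a ⊗ₜ[k] (1 : H) :=
  Iff.rfl

theorem rho_t (ρ : A →ₐ[k] A ⊗[k] H) (t : H →ₗ[k] A) (ht : memC21 ρ.toLinearMap t) :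
    ρ.toLinearMap ∘ₗ t = sp t LinearMap.id := by
  ext h
  rw [LinearMap.comp_apply, sp_apply_repr t LinearMap.id (ℛ k h)]
  have := ht h
  rw [AlgHom.toLinearMap_apply] at this ⊢
  rw [this, ← (ℛ k h).eq, map_sum]
  simp

theorem rho_u (hcoc : ∀ h : H, (TensorProduct.comm k H H) (Coalgebra.comul (R := k) h) =
      Coalgebra.comul (R := k) h)
    (ρ : A →ₐ[k] A ⊗[k] H) (t u : H →ₗ[k] A) (ht : memC21 ρ.toLinearMap t)
    (htu : cv t u = cvone) (hut : cv u t = cvone) :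
    ρ.toLinearMap ∘ₗ u = sp u (HopfAlgebra.antipode (R := k)) := by
  have hTU : cv (sp t LinearMap.id) (sp u (HopfAlgebra.antipode (R := k))) = cvone := by
    rw [sp_mul hcoc, htu, cv_id_antipode, sp_cvone_cvone]
  have hUT : cv (ρ.toLinearMap ∘ₗ u) (sp t LinearMap.id) = cvone := by
    rw [← rho_t ρ t ht, ← alghom_comp_cv, hut, alghom_comp_cvone]
  exact cv_unique hTU hUT

def OmMap (t u : H →ₗ[k] A) (b : A) : H →ₗ[k] A :=
  cv t (cv ((Coalgebra.counit (R := k) (A := H)).smulRight b) u)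

theorem rho_eta (ρ : A →ₐ[k] A ⊗[k] H) {b : A} (hb : b ∈ coinv ρ) :
    ρ.toLinearMap ∘ₗ ((Coalgebra.counit (R := k) (A := H)).smulRight b)
      = sp ((Coalgebra.counit (R := k) (A := H)).smulRight b) cvone := by
  rw [sp_cvone_right]
  ext h
  simp only [LinearMap.comp_apply, LinearMap.smulRight_apply, AlgHom.toLinearMap_apply, map_smul]
  rw [mem_coinv.mp hb]
  simp

theorem rho_Om (hcoc : ∀ h : H, (TensorProduct.comm k H H) (Coalgebra.comul (R := k) h) =
      Coalgebra.comul (R := k) h)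
    (ρ : A →ₐ[k] A ⊗[k] H) (t u : H →ₗ[k] A) (ht : memC21 ρ.toLinearMap t)
    (htu : cv t u = cvone) (hut : cv u t = cvone) {b : A} (hb : b ∈ coinv ρ) :
    ρ.toLinearMap ∘ₗ OmMap t u b
      = (Algebra.TensorProduct.includeLeft (R := k) (A := A) (B := H)).toLinearMap ∘ₗ OmMap t u b := by
  unfold OmMap
  rw [alghom_comp_cv, alghom_comp_cv, rho_t ρ t ht, rho_eta ρ hb,
    rho_u hcoc ρ t u ht htu hut, sp_mul hcoc, sp_mul hcoc, cv_cvone_left, cv_id_antipode,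
    sp_cvone_right]

theorem Om_mem (hcoc : ∀ h : H, (TensorProduct.comm k H H) (Coalgebra.comul (R := k) h) =
      Coalgebra.comul (R := k) h)
    (ρ : A →ₐ[k] A ⊗[k] H) (t u : H →ₗ[k] A) (ht : memC21 ρ.toLinearMap t)
    (htu : cv t u = cvone) (hut : cv u t = cvone) {b : A} (hb : b ∈ coinv ρ) (h : H) :
    OmMap t u b h ∈ coinv ρ := by
  rw [mem_coinv]
  have := congrArg (fun F : H →ₗ[k] A ⊗[k] H => F h) (rho_Om hcoc ρ t u ht htu hut hb)
  simpa using this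

theorem bval_comm {ρ : A →ₐ[k] A ⊗[k] H} (hBcomm : ∀ b b' : coinv ρ, b * b' = b' * b)
    {x y : A} (hx : x ∈ coinv ρ) (hy : y ∈ coinv ρ) : x * y = y * x := by
  have := hBcomm ⟨x, hx⟩ ⟨y, hy⟩
  exact congrArg Subtype.val this

theorem Om_indep (hcoc : ∀ h : H, (TensorProduct.comm k H H) (Coalgebra.comul (R := k) h) =
      Coalgebra.comul (R := k) h)
    (ρ : A →ₐ[k] A ⊗[k] H) (hBcomm : ∀ b b' : coinv ρ, b * b' = b' * b)
    (t u : H →ₗ[k] A) (ht : memC21 ρ.toLinearMap t)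
    (htu : cv t u = cvone) (hut : cv u t = cvone)
    (t₁ u₁ : H →ₗ[k] A) (ht₁ : memC21 ρ.toLinearMap t₁)
    (htu₁ : cv t₁ u₁ = cvone) (hut₁ : cv u₁ t₁ = cvone)
    {b : A} (hb : b ∈ coinv ρ) :
    OmMap t₁ u₁ b = OmMap t u b := by
  set ηb := (Coalgebra.counit (R := k) (A := H)).smulRight b with hηb
  set v := cv u t₁ with hv
  set v' := cv u₁ t with hv'
  -- v and v' are B-valued
  have hv_mem : ∀ h, v h ∈ coinv ρ := by
    intro h
    rw [mem_coinv]
    have hmap : ρ.toLinearMap ∘ₗ v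
        = (Algebra.TensorProduct.includeLeft (R := k) (A := A) (B := H)).toLinearMap ∘ₗ v := by
      rw [hv, alghom_comp_cv, rho_u hcoc ρ t u ht htu hut, rho_t ρ t₁ ht₁, sp_mul hcoc,
        cv_antipode_id, sp_cvone_right]
    have := congrArg (fun F : H →ₗ[k] A ⊗[k] H => F h) hmap
    simpa using this
  have hv'_mem : ∀ h, v' h ∈ coinv ρ := by
    intro h
    rw [mem_coinv]
    have hmap : ρ.toLinearMap ∘ₗ v'
        = (Algebra.TensorProduct.includeLeft (R := k) (A := A) (B := H)).toLinearMap ∘ₗ v' := by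
      rw [hv', alghom_comp_cv, rho_u hcoc ρ t₁ u₁ ht₁ htu₁ hut₁, rho_t ρ t ht, sp_mul hcoc,
        cv_antipode_id, sp_cvone_right]
    have := congrArg (fun F : H →ₗ[k] A ⊗[k] H => F h) hmap
    simpa using this
  have hηb_mem : ∀ h, ηb h ∈ coinv ρ := by
    intro h
    exact Subalgebra.smul_mem _ hb _
  -- t₁ = t ⋆ v, u₁ = v' ⋆ u
  have ht₁eq : t₁ = cv t v := by
    rw [hv, ← cv_assoc, htu, cv_cvone_left]
  have hu₁eq : u₁ = cv v' u := by
    rw [hv', cv_assoc, htu, cv_cvone_right]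
  have step : cv v (cv ηb (cv v' u)) = cv ηb u := by
    have swap : cv v ηb = cv ηb v :=
      cv_comm hcoc fun x y => bval_comm hBcomm (hv_mem x) (hηb_mem y)
    have hvv' : cv v v' = cvone := by
      calc cv v v' = cv (cv u t₁) (cv u₁ t) := rfl
        _ = cv u (cv t₁ (cv u₁ t)) := cv_assoc u t₁ (cv u₁ t)
        _ = cv u (cv (cv t₁ u₁) t) := congrArg (cv u) (cv_assoc t₁ u₁ t).symm
        _ = cv u (cv cvone t) := by rw [htu₁]
        _ = cv u t := congrArg (cv u) (cv_cvone_left t)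
        _ = cvone := hut
    calc cv v (cv ηb (cv v' u)) = cv (cv v ηb) (cv v' u) := (cv_assoc v ηb (cv v' u)).symm
      _ = cv (cv ηb v) (cv v' u) := by rw [swap]
      _ = cv ηb (cv v (cv v' u)) := cv_assoc ηb v (cv v' u)
      _ = cv ηb (cv (cv v v') u) := congrArg (cv ηb) (cv_assoc v v' u).symm
      _ = cv ηb (cv cvone u) := by rw [hvv']
      _ = cv ηb u := congrArg (cv ηb) (cv_cvone_left u)
  calc OmMap t₁ u₁ b = cv t₁ (cv ηb u₁) := rfl
    _ = cv (cv t v) (cv ηb (cv v' u)) := by rw [← ht₁eq, ← hu₁eq]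
    _ = cv t (cv v (cv ηb (cv v' u))) := cv_assoc t v (cv ηb (cv v' u))
    _ = cv t (cv ηb u) := by rw [step]

section Comp2

theorem comp_key (hcoc : ∀ h : H, (TensorProduct.comm k H H) (Coalgebra.comul (R := k) h) =
      Coalgebra.comul (R := k) h)
    (ρ : A →ₐ[k] A ⊗[k] H) (hBcomm : ∀ b b' : coinv ρ, b * b' = b' * b)
    (t u : H →ₗ[k] A) (ht : memC21 ρ.toLinearMap t)
    (htu : cv t u = cvone) (hut : cv u t = cvone) {b : A} (hb : b ∈ coinv ρ) :
    cv ((LinearMap.mul' k A) ∘ₗ TensorProduct.map t t)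
      (cv ((Coalgebra.counit (R := k) (A := H ⊗[k] H)).smulRight b)
        (((LinearMap.mul' k A) ∘ₗ TensorProduct.map u u) ∘ₗ (TensorProduct.comm k H H).toLinearMap))
      = OmMap t u b ∘ₗ LinearMap.mul' k H := by
  set S := HopfAlgebra.antipode (R := k) (A := H) with hS
  set α : H ⊗[k] H →ₗ[k] A := (LinearMap.mul' k A) ∘ₗ TensorProduct.map t t with hα
  set β : H ⊗[k] H →ₗ[k] A :=
    ((LinearMap.mul' k A) ∘ₗ TensorProduct.map u u) ∘ₗ (TensorProduct.comm k H H).toLinearMap with hβ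
  set γ : H ⊗[k] H →ₗ[k] A := t ∘ₗ LinearMap.mul' k H with hγ
  set δ : H ⊗[k] H →ₗ[k] A := u ∘ₗ LinearMap.mul' k H with hδ
  set ηb : H ⊗[k] H →ₗ[k] A := (Coalgebra.counit (R := k) (A := H ⊗[k] H)).smulRight b with hηb
  have hcocC := cocomm_tensor hcoc
  -- pointwise values
  have hαval : ∀ (x y : H), α (x ⊗ₜ[k] y) = t x * t y := by intro x y; simp [hα]
  have hβval : ∀ (x y : H), β (x ⊗ₜ[k] y) = u y * u x := by intro x y; simp [hβ]
  have hγval : ∀ (x y : H), γ (x ⊗ₜ[k] y) = t (x * y) := by intro x y; simp [hγ]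
  have hδval : ∀ (x y : H), δ (x ⊗ₜ[k] y) = u (x * y) := by intro x y; simp [hδ]
  -- convolution identities
  have htu' : ∀ x : H, cv t u x = algebraMap k A (Coalgebra.counit (R := k) x) := by
    intro x; rw [htu]; rfl
  have hut' : ∀ x : H, cv u t x = algebraMap k A (Coalgebra.counit (R := k) x) := by
    intro x; rw [hut]; rfl
  have hαβ : cv α β = cvone := by
    apply TensorProduct.ext'
    intro h h'
    rw [cv_tmul_repr _ _ h h' (ℛ k h) (ℛ k h'), cvone_tensor_apply]
    calc ∑ i ∈ (ℛ k h).index, ∑ j ∈ (ℛ k h').index,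
          α ((ℛ k h).left i ⊗ₜ[k] (ℛ k h').left j) * β ((ℛ k h).right i ⊗ₜ[k] (ℛ k h').right j)
        = ∑ i ∈ (ℛ k h).index, t ((ℛ k h).left i) *
            ((∑ j ∈ (ℛ k h').index, t ((ℛ k h').left j) * u ((ℛ k h').right j)) *
              u ((ℛ k h).right i)) := by
          apply Finset.sum_congr rfl; intro i _
          rw [Finset.sum_mul, Finset.mul_sum]
          apply Finset.sum_congr rfl; intro j _
          rw [hαval, hβval]
          noncomm_ring
      _ = algebraMap k A (Coalgebra.counit (R := k) h * Coalgebra.counit (R := k) h') := by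
          rw [← cv_apply_repr t u (ℛ k h'), htu']
          have : ∀ i ∈ (ℛ k h).index, t ((ℛ k h).left i) *
              (algebraMap k A (Coalgebra.counit (R := k) h') * u ((ℛ k h).right i))
              = algebraMap k A (Coalgebra.counit (R := k) h') *
                (t ((ℛ k h).left i) * u ((ℛ k h).right i)) := by
            intro i _
            rw [← mul_assoc, ← Algebra.commutes, mul_assoc]
          rw [Finset.sum_congr rfl this, ← Finset.mul_sum, ← cv_apply_repr t u (ℛ k h), htu',
            ← map_mul, mul_comm]
  have hβα : cv β α = cvone := by
    apply TensorProduct.ext'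
    intro h h'
    rw [cv_tmul_repr _ _ h h' (ℛ k h) (ℛ k h'), cvone_tensor_apply, Finset.sum_comm]
    calc ∑ j ∈ (ℛ k h').index, ∑ i ∈ (ℛ k h).index,
          β ((ℛ k h).left i ⊗ₜ[k] (ℛ k h').left j) * α ((ℛ k h).right i ⊗ₜ[k] (ℛ k h').right j)
        = ∑ j ∈ (ℛ k h').index, u ((ℛ k h').left j) *
            ((∑ i ∈ (ℛ k h).index, u ((ℛ k h).left i) * t ((ℛ k h).right i)) *
              t ((ℛ k h').right j)) := by
          apply Finset.sum_congr rfl; intro j _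
          rw [Finset.sum_mul, Finset.mul_sum]
          apply Finset.sum_congr rfl; intro i _
          rw [hβval, hαval]
          noncomm_ring
      _ = algebraMap k A (Coalgebra.counit (R := k) h * Coalgebra.counit (R := k) h') := by
          rw [← cv_apply_repr u t (ℛ k h), hut']
          have : ∀ j ∈ (ℛ k h').index, u ((ℛ k h').left j) *
              (algebraMap k A (Coalgebra.counit (R := k) h) * t ((ℛ k h').right j))
              = algebraMap k A (Coalgebra.counit (R := k) h) *
                (u ((ℛ k h').left j) * t ((ℛ k h').right j)) := by
            intro j _
            rw [← mul_assoc, ← Algebra.commutes, mul_assoc]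
          rw [Finset.sum_congr rfl this, ← Finset.mul_sum, ← cv_apply_repr u t (ℛ k h'), hut',
            ← map_mul]
  have hγδ : cv γ δ = cvone := by rw [hγ, hδ, cv_mu, htu, cvone_mu]
  have hδγ : cv δ γ = cvone := by rw [hγ, hδ, cv_mu, hut, cvone_mu]
  -- ρ ∘ α, ρ ∘ β, ρ ∘ γ, ρ ∘ δ
  have hrt : ∀ x : H, ρ (t x) = sp t LinearMap.id x := by
    intro x
    exact congrArg (fun F : H →ₗ[k] A ⊗[k] H => F x) (rho_t ρ t ht)
  have hru : ∀ x : H, ρ (u x) = sp u S x := by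
    intro x
    exact congrArg (fun F : H →ₗ[k] A ⊗[k] H => F x) (rho_u hcoc ρ t u ht htu hut)
  have hρα : ρ.toLinearMap ∘ₗ α = sp α (LinearMap.mul' k H) := by
    apply TensorProduct.ext'
    intro h h'
    rw [LinearMap.comp_apply, hαval, AlgHom.toLinearMap_apply, map_mul, hrt, hrt,
      sp_apply_repr t LinearMap.id (ℛ k h), sp_apply_repr t LinearMap.id (ℛ k h'),
      Finset.sum_mul_sum]
    rw [show sp α (LinearMap.mul' k H) (h ⊗ₜ[k] h') =
      ∑ i ∈ (ℛ k h).index, ∑ j ∈ (ℛ k h').index,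
        ((Algebra.TensorProduct.includeLeft (R := k) (A := A) (B := H)).toLinearMap ∘ₗ α)
          ((ℛ k h).left i ⊗ₜ[k] (ℛ k h').left j) *
        ((Algebra.TensorProduct.includeRight (R := k) (A := A) (B := H)).toLinearMap ∘ₗ
          LinearMap.mul' k H) ((ℛ k h).right i ⊗ₜ[k] (ℛ k h').right j)
      from cv_tmul_repr _ _ h h' (ℛ k h) (ℛ k h')]
    apply Finset.sum_congr rfl; intro i _
    apply Finset.sum_congr rfl; intro j _
    simp [hαval, Algebra.TensorProduct.tmul_mul_tmul]
  have hρβ : ρ.toLinearMap ∘ₗ β = sp β (S ∘ₗ LinearMap.mul' k H) := by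
    apply TensorProduct.ext'
    intro h h'
    rw [LinearMap.comp_apply, hβval, AlgHom.toLinearMap_apply, map_mul, hru, hru,
      sp_apply_repr u S (ℛ k h), sp_apply_repr u S (ℛ k h'), Finset.sum_mul_sum]
    rw [show sp β (S ∘ₗ LinearMap.mul' k H) (h ⊗ₜ[k] h') =
      ∑ i ∈ (ℛ k h).index, ∑ j ∈ (ℛ k h').index,
        ((Algebra.TensorProduct.includeLeft (R := k) (A := A) (B := H)).toLinearMap ∘ₗ β)
          ((ℛ k h).left i ⊗ₜ[k] (ℛ k h').left j) *
        ((Algebra.TensorProduct.includeRight (R := k) (A := A) (B := H)).toLinearMap ∘ₗ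
          (S ∘ₗ LinearMap.mul' k H)) ((ℛ k h).right i ⊗ₜ[k] (ℛ k h').right j)
      from cv_tmul_repr _ _ h h' (ℛ k h) (ℛ k h')]
    rw [Finset.sum_comm]
    apply Finset.sum_congr rfl; intro j _
    apply Finset.sum_congr rfl; intro i _
    simp [hβval, Algebra.TensorProduct.tmul_mul_tmul, hS, antipode_mul']
  have hspmu : ∀ (f : H →ₗ[k] A) (g : H →ₗ[k] H),
      (sp f g) ∘ₗ LinearMap.mul' k H = sp (f ∘ₗ LinearMap.mul' k H) (g ∘ₗ LinearMap.mul' k H) := by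
    intro f g
    rw [sp, ← cv_mu]
    rfl
  have hργ : ρ.toLinearMap ∘ₗ γ = sp γ (LinearMap.mul' k H) := by
    rw [hγ, ← LinearMap.comp_assoc, rho_t ρ t ht, hspmu]
    congr 1
  have hρδ : ρ.toLinearMap ∘ₗ δ = sp δ (S ∘ₗ LinearMap.mul' k H) := by
    rw [hδ, ← LinearMap.comp_assoc, rho_u hcoc ρ t u ht htu hut, hspmu]
  -- σ and σ̄ are B-valued
  have hid_mu : (LinearMap.id (M := H)) ∘ₗ LinearMap.mul' k H = LinearMap.mul' k H := rfl
  have hmuS : cv (LinearMap.mul' k H) (S ∘ₗ LinearMap.mul' k H)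
      = cvone (k := k) (C := H ⊗[k] H) (D := H) := by
    have h2 := cv_mu (k := k) (LinearMap.id (M := H)) S
    rw [hid_mu] at h2
    rw [h2, cv_id_antipode, cvone_mu]
  have hσmem : ∀ x, (cv α δ) x ∈ coinv ρ := by
    intro x
    rw [mem_coinv]
    have hmap : ρ.toLinearMap ∘ₗ cv α δ
        = (Algebra.TensorProduct.includeLeft (R := k) (A := A) (B := H)).toLinearMap ∘ₗ cv α δ := by
      rw [alghom_comp_cv, hρα, hρδ, sp_mul hcocC, hmuS, sp_cvone_right]
    have := congrArg (fun F : H ⊗[k] H →ₗ[k] A ⊗[k] H => F x) hmap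
    simpa using this
  have hσ'mem : ∀ x, (cv γ β) x ∈ coinv ρ := by
    intro x
    rw [mem_coinv]
    have hmap : ρ.toLinearMap ∘ₗ cv γ β
        = (Algebra.TensorProduct.includeLeft (R := k) (A := A) (B := H)).toLinearMap ∘ₗ cv γ β := by
      rw [alghom_comp_cv, hρβ, hργ, sp_mul hcocC, hmuS, sp_cvone_right]
    have := congrArg (fun F : H ⊗[k] H →ₗ[k] A ⊗[k] H => F x) hmap
    simpa using this
  -- G = Om b ∘ μ
  have hG : cv γ (cv ηb δ) = OmMap t u b ∘ₗ LinearMap.mul' k H := by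
    rw [hηb, ← eta_mu, hγ, hδ, cv_mu, cv_mu]
    rfl
  have hGmem : ∀ x, (cv γ (cv ηb δ)) x ∈ coinv ρ := by
    intro x
    rw [hG]
    exact Om_mem hcoc ρ t u ht htu hut hb _
  -- E1 : σ ⋆ (G ⋆ σ̄) = α ⋆ (ηb ⋆ β)
  have E1 : cv (cv α δ) (cv (cv γ (cv ηb δ)) (cv γ β)) = cv α (cv ηb β) := by
    calc cv (cv α δ) (cv (cv γ (cv ηb δ)) (cv γ β))
        = cv α (cv δ (cv (cv γ (cv ηb δ)) (cv γ β))) := cv_assoc _ _ _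
      _ = cv α (cv δ (cv γ (cv (cv ηb δ) (cv γ β)))) := by
          rw [cv_assoc γ (cv ηb δ) (cv γ β)]
      _ = cv α (cv (cv ηb δ) (cv γ β)) := by rw [cv_cancel δ γ _ hδγ]
      _ = cv α (cv ηb (cv δ (cv γ β))) := by rw [cv_assoc ηb δ (cv γ β)]
      _ = cv α (cv ηb β) := by rw [cv_cancel δ γ β hδγ]
  -- E2 : σ ⋆ (G ⋆ σ̄) = G
  have hηbmem : ∀ x, ηb x ∈ coinv ρ := fun x => Subalgebra.smul_mem _ hb _
  have hGσ'mem : ∀ x, (cv (cv γ (cv ηb δ)) (cv γ β)) x ∈ coinv ρ :=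
    cv_mem (coinv ρ) hGmem hσ'mem
  have E2 : cv (cv α δ) (cv (cv γ (cv ηb δ)) (cv γ β)) = cv γ (cv ηb δ) := by
    have swap : cv (cv α δ) (cv (cv γ (cv ηb δ)) (cv γ β))
        = cv (cv (cv γ (cv ηb δ)) (cv γ β)) (cv α δ) :=
      cv_comm hcocC fun x y => bval_comm hBcomm (hσmem x) (hGσ'mem y)
    have hσ'σ : cv (cv γ β) (cv α δ) = cvone := by
      calc cv (cv γ β) (cv α δ) = cv γ (cv β (cv α δ)) := cv_assoc _ _ _
        _ = cv γ (cv (cv β α) δ) := by rw [cv_assoc β α δ]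
        _ = cv γ (cv cvone δ) := by rw [hβα]
        _ = cv γ δ := by rw [cv_cvone_left]
        _ = cvone := hγδ
    calc cv (cv α δ) (cv (cv γ (cv ηb δ)) (cv γ β))
        = cv (cv (cv γ (cv ηb δ)) (cv γ β)) (cv α δ) := swap
      _ = cv (cv γ (cv ηb δ)) (cv (cv γ β) (cv α δ)) := cv_assoc _ _ _
      _ = cv (cv γ (cv ηb δ)) cvone := by rw [hσ'σ]
      _ = cv γ (cv ηb δ) := cv_cvone_right _
  rw [← hG, ← E2, E1]


end Comp2

section Asm3

theorem Om_add (t u : H →ₗ[k] A) (b c : A) :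
    OmMap t u (b + c) = OmMap t u b + OmMap t u c := by
  rw [OmMap, OmMap, OmMap, smulRight_add, cv_add_left, cv_add_right]

theorem Om_smul (t u : H →ₗ[k] A) (s : k) (b : A) :
    OmMap t u (s • b) = s • OmMap t u b := by
  rw [OmMap, OmMap, smulRight_smul, cv_smul_left, cv_smul_right]

theorem Om_apply_repr (t u : H →ₗ[k] A) (b : A) (h : H) {ι_r : Type*} (r : Coalgebra.Repr k h ι_r) :
    OmMap t u b h = ∑ i ∈ r.index, t (r.left i) * b * u (r.right i) := by
  rw [OmMap, cv_eta_left, cv_apply_repr _ _ r]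
  apply Finset.sum_congr rfl
  intro i _
  rw [LinearMap.comp_apply, LinearMap.mulLeft_apply, mul_assoc]

/-- The action, packaged as a linear map. -/
def actMap (ρ : A →ₐ[k] A ⊗[k] H) (t u : H →ₗ[k] A)
    (hmem : ∀ (b : A), b ∈ coinv ρ → ∀ h, OmMap t u b h ∈ coinv ρ) :
    H →ₗ[k] (coinv ρ) →ₗ[k] (coinv ρ) where
  toFun h :=
    { toFun := fun b => ⟨OmMap t u (b : A) h, hmem _ b.2 h⟩
      map_add' := by
        intro b c
        apply Subtype.ext
        show OmMap t u ((b : A) + (c : A)) h = OmMap t u (b : A) h + OmMap t u (c : A) h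
        rw [Om_add]; rfl
      map_smul' := by
        intro s b
        apply Subtype.ext
        show OmMap t u (s • (b : A)) h = s • OmMap t u (b : A) h
        rw [Om_smul]; rfl }
  map_add' := by
    intro h h'
    ext b
    show OmMap t u (b : A) (h + h') = OmMap t u (b : A) h + OmMap t u (b : A) h'
    rw [map_add]
  map_smul' := by
    intro s h
    ext b
    show OmMap t u (b : A) (s • h) = s • OmMap t u (b : A) h
    rw [map_smul]

theorem Om_one (t u : H →ₗ[k] A) (htu : cv t u = cvone) :
    OmMap t u (1 : A) = cvone := by
  rw [OmMap, smulRight_one_eq, cv_cvone_left, htu]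

theorem Om_mul (t u : H →ₗ[k] A) (hut : cv u t = cvone) (b c : A) :
    OmMap t u (b * c) = cv (OmMap t u b) (OmMap t u c) := by
  set ηb := (Coalgebra.counit (R := k) (A := H)).smulRight b with hηb
  set ηc := (Coalgebra.counit (R := k) (A := H)).smulRight c with hηc
  calc OmMap t u (b * c) = cv t (cv ((Coalgebra.counit (R := k)).smulRight (b * c)) u) := rfl
    _ = cv t (cv (cv ηb ηc) u) := by rw [eta_cv_eta]
    _ = cv t (cv ηb (cv ηc u)) := by rw [cv_assoc ηb ηc u]
    _ = cv t (cv ηb (cv u (cv t (cv ηc u)))) := by rw [cv_cancel u t _ hut]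
    _ = cv t (cv (cv ηb u) (cv t (cv ηc u))) := by rw [cv_assoc ηb u _]
    _ = cv (cv t (cv ηb u)) (cv t (cv ηc u)) := by rw [cv_assoc t (cv ηb u) _]
    _ = cv (OmMap t u b) (OmMap t u c) := rfl

theorem Om_comp_eval (t u : H →ₗ[k] A) (b : A) (h h' : H) :
    cv ((LinearMap.mul' k A) ∘ₗ TensorProduct.map t t)
      (cv ((Coalgebra.counit (R := k) (A := H ⊗[k] H)).smulRight b)
        (((LinearMap.mul' k A) ∘ₗ TensorProduct.map u u) ∘ₗ (TensorProduct.comm k H H).toLinearMap))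
      (h ⊗ₜ[k] h')
      = OmMap t u (OmMap t u b h') h := by
  rw [cv_eta_left, cv_tmul_repr _ _ h h' (ℛ k h) (ℛ k h')]
  have hrhs : OmMap t u (OmMap t u b h') h
      = ∑ i ∈ (ℛ k h).index, ∑ j ∈ (ℛ k h').index,
          t ((ℛ k h).left i) * ((t ((ℛ k h').left j) * b * u ((ℛ k h').right j)) *
            u ((ℛ k h).right i)) := by
    rw [Om_apply_repr t u _ h (ℛ k h)]
    apply Finset.sum_congr rfl
    intro i _
    rw [Om_apply_repr t u b h' (ℛ k h'), Finset.mul_sum, Finset.sum_mul]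
    apply Finset.sum_congr rfl
    intro j _
    noncomm_ring
  rw [hrhs]
  apply Finset.sum_congr rfl
  intro i _
  apply Finset.sum_congr rfl
  intro j _
  simp only [LinearMap.comp_apply, TensorProduct.map_tmul, LinearMap.mul'_apply,
    LinearMap.mulLeft_apply, LinearEquiv.coe_coe, TensorProduct.comm_tmul]
  noncomm_ring

end Asm3

end OmAux

noncomputable section

/-- Lemma 5.5: let `H` be a cocommutative Hopf algebra and `A` a cleft
right `H`-comodule algebra whose coinvariant algebra `B = A^{co H}` is commutative.  For a
convolution invertible `t ∈ Hom^H(H, A)` with convolution inverse `u`, the map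
`ω_t(h ⊗ b) = t(h₍₁₎) b u(h₍₂₎)` takes values in `B`, is independent of the choice of `t`,
and makes `B` into a left `H`-module algebra. -/
theorem stmt12_module_algebra_structure
    {k H A : Type u} [CommRing k] [Ring H] [HopfAlgebra k H] [Ring A] [Algebra k A]
    (hcoc : ∀ h : H, (TensorProduct.comm k H H) (Coalgebra.comul (R := k) h) =
      Coalgebra.comul (R := k) h)
    (ρ : A →ₐ[k] A ⊗[k] H) (hρ : IsCoaction ρ.toLinearMap)
    (hBcomm : ∀ b b' : coinv ρ, b * b' = b' * b)
    (t u : H →ₗ[k] A) (ht : memC21 ρ.toLinearMap t)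
    (htu : conv t u = Algebra.linearMap k A ∘ₗ Coalgebra.counit)
    (hut : conv u t = Algebra.linearMap k A ∘ₗ Coalgebra.counit) :
    ∃ act : H →ₗ[k] (coinv ρ) →ₗ[k] (coinv ρ),
      -- `act` is given by `ω_t(h ⊗ b) = t(h₍₁₎) b u(h₍₂₎)`; in particular `ω_t` takes
      -- values in `B`
      (∀ (h : H) (b : coinv ρ) (ι : Type u) (r : Coalgebra.Repr k h ι),
        ((act h b : A)) = ∑ i ∈ r.index, t (r.left i) * (b : A) * u (r.right i)) ∧
      -- `ω_t` is independent of the choice of the cleaving map `t`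
      (∀ t₁ u₁ : H →ₗ[k] A, memC21 ρ.toLinearMap t₁ →
        conv t₁ u₁ = Algebra.linearMap k A ∘ₗ Coalgebra.counit →
        conv u₁ t₁ = Algebra.linearMap k A ∘ₗ Coalgebra.counit →
        ∀ (h : H) (b : coinv ρ) (ι : Type u) (r : Coalgebra.Repr k h ι),
          ((act h b : A)) = ∑ i ∈ r.index, t₁ (r.left i) * (b : A) * u₁ (r.right i)) ∧
      -- `act` makes `B` into a left `H`-module algebra
      (∀ h : H, act h 1 = Coalgebra.counit (R := k) h • (1 : coinv ρ)) ∧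
      (∀ (h : H) (b c : coinv ρ) (ι : Type u) (r : Coalgebra.Repr k h ι),
        act h (b * c) = ∑ i ∈ r.index, act (r.left i) b * act (r.right i) c) ∧
      (∀ b : coinv ρ, act 1 b = b) ∧
      (∀ (h h' : H) (b : coinv ρ), act h (act h' b) = act (h * h') b) := by
  have htu' : cv t u = cvone := htu
  have hut' : cv u t = cvone := hut
  have hmem : ∀ (b : A), b ∈ coinv ρ → ∀ h, OmMap t u b h ∈ coinv ρ := by
    intro b hb h
    exact Om_mem hcoc ρ t u ht htu' hut' hb h
  refine ⟨actMap ρ t u hmem, ?_, ?_, ?_, ?_, ?_, ?_⟩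
  · -- formula
    intro h b ι r
    exact Om_apply_repr t u (b : A) h r
  · -- independence
    intro t₁ u₁ ht₁ htu₁ hut₁ h b ι r
    have hind := Om_indep hcoc ρ hBcomm t u ht htu' hut' t₁ u₁ ht₁ htu₁ hut₁ b.2
    have : ((actMap ρ t u hmem h b : A)) = OmMap t₁ u₁ (b : A) h := by
      show OmMap t u (b : A) h = OmMap t₁ u₁ (b : A) h
      rw [hind]
    rw [this, Om_apply_repr t₁ u₁ (b : A) h r]
  · -- counit axiom
    intro h
    apply Subtype.ext
    show OmMap t u ((1 : coinv ρ) : A) h = ((Coalgebra.counit (R := k) h • (1 : coinv ρ) : coinv ρ) : A)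
    rw [show ((1 : coinv ρ) : A) = (1 : A) from rfl, Om_one t u htu']
    simp [cvone, Algebra.algebraMap_eq_smul_one]
  · -- multiplicativity
    intro h b c ι r
    apply Subtype.ext
    show OmMap t u ((b * c : coinv ρ) : A) h = _
    rw [show ((b * c : coinv ρ) : A) = (b : A) * (c : A) from rfl, Om_mul t u hut',
      cv_apply_repr _ _ r]
    rw [show (((∑ i ∈ r.index, actMap ρ t u hmem (r.left i) b * actMap ρ t u hmem (r.right i) c :
      coinv ρ)) : A) = ∑ i ∈ r.index, OmMap t u (b : A) (r.left i) * OmMap t u (c : A) (r.right i)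
      from by push_cast; rfl]
  · -- unitality
    intro b
    apply Subtype.ext
    show OmMap t u (b : A) 1 = (b : A)
    have hval : OmMap t u (b : A) 1 = t 1 * ((b : A) * u 1) := by
      rw [OmMap, cv_apply_one, cv_apply_one]
      simp [Bialgebra.counit_one]
    have ht1 : t 1 ∈ coinv ρ := by
      rw [mem_coinv]
      have := congrArg (fun F : H →ₗ[k] A ⊗[k] H => F 1) (rho_t ρ t ht)
      simpa [sp_apply_one] using this
    have hu1 : u 1 ∈ coinv ρ := by
      rw [mem_coinv]
      have := congrArg (fun F : H →ₗ[k] A ⊗[k] H => F 1)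
        (rho_u hcoc ρ t u ht htu' hut')
      simp only [LinearMap.comp_apply, AlgHom.toLinearMap_apply, sp_apply_one] at this
      rw [this, antipode_one']
    have htu1 : t 1 * u 1 = 1 := by
      have := congrArg (fun F : H →ₗ[k] A => F 1) htu'
      rw [cv_apply_one] at this
      rw [this]
      simp [cvone, Bialgebra.counit_one]
    rw [hval, bval_comm hBcomm b.2 hu1, ← mul_assoc, htu1, one_mul]
  · -- composition
    intro h h' b
    apply Subtype.ext
    show OmMap t u (OmMap t u (b : A) h') h = OmMap t u (b : A) (h * h')
    have hkey := congrArg (fun F : (H ⊗[k] H) →ₗ[k] A => F (h ⊗ₜ[k] h'))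
      (comp_key hcoc ρ hBcomm t u ht htu' hut' b.2)
    rw [Om_comp_eval] at hkey
    rw [hkey]
    simp
end
end
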